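/- First-moment condition for the discrete delta function: for every grid spacing h > 0 and every point X ∈ ℝ³, the vector-valued sum over all grid points x = h·v with v ∈ ℤ³ of (x − X)·δ̂(x − X, h)·h³ equals the zero vector in ℝ³. -/
import Mathlib


/-- The Peskin four-point kernel. -/
noncomputable def peskinPhi (r : ℝ) : ℝ :=
  if |r| ≤ 1 then (3 - 2 * |r| + Real.sqrt (1 + 4 * |r| - 4 * |r| ^ 2)) / 8
  else if |r| ≤ 2 then (5 - 2 * |r| - Real.sqrt (-7 + 12 * |r| - 4 * |r| ^ 2)) / 8
  else 0

/-- The smoothed Dirac delta function `δ̂(x, ω) = ω⁻³ φ(x₁/ω) φ(x₂/ω) φ(x₃/ω)`. -/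
noncomputable def deltaHat (x : Fin 3 → ℝ) (ω : ℝ) : ℝ :=
  ω⁻¹ ^ 3 * (peskinPhi (x 0 / ω) * peskinPhi (x 1 / ω) * peskinPhi (x 2 / ω))

lemma peskinPhi_neg (t : ℝ) : peskinPhi (-t) = peskinPhi t := by
  simp [peskinPhi, abs_neg]

lemma peskinPhi_zero_of_two_le {t : ℝ} (ht : 2 ≤ |t|) : peskinPhi t = 0 := by
  unfold peskinPhi
  rcases le_or_gt |t| 2 with h2 | h2
  · have he : |t| = 2 := le_antisymm h2 ht
    rw [if_neg (by linarith), if_pos h2, he]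
    norm_num
  · rw [if_neg (by linarith), if_neg (by linarith)]

lemma phi_eval0 {a : ℝ} (h0 : 0 ≤ a) (h1 : a < 1) :
    peskinPhi a = (3 - 2 * a + Real.sqrt (1 + 4 * a - 4 * a ^ 2)) / 8 := by
  unfold peskinPhi
  rw [abs_of_nonneg h0, if_pos h1.le]

lemma phi_eval1 {a : ℝ} (h0 : 0 ≤ a) (h1 : a < 1) :
    peskinPhi (1 + a) = (3 - 2 * a - Real.sqrt (1 + 4 * a - 4 * a ^ 2)) / 8 := by
  unfold peskinPhi
  rw [abs_of_nonneg (by linarith)]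
  rcases eq_or_lt_of_le h0 with h | h
  · rw [← h]
    norm_num
  · rw [if_neg (by linarith), if_pos (by linarith),
      show -7 + 12 * (1 + a) - 4 * (1 + a) ^ 2 = 1 + 4 * a - 4 * a ^ 2 by ring]
    ring

lemma phi_eval1m {a : ℝ} (h0 : 0 ≤ a) (h1 : a < 1) :
    peskinPhi (1 - a) = (1 + 2 * a + Real.sqrt (1 + 4 * a - 4 * a ^ 2)) / 8 := by
  unfold peskinPhi
  rw [abs_of_nonneg (by linarith), if_pos (by linarith),
    show 1 + 4 * (1 - a) - 4 * (1 - a) ^ 2 = 1 + 4 * a - 4 * a ^ 2 by ring]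
  ring

lemma phi_eval2m {a : ℝ} (h0 : 0 ≤ a) (h1 : a < 1) :
    peskinPhi (2 - a) = (1 + 2 * a - Real.sqrt (1 + 4 * a - 4 * a ^ 2)) / 8 := by
  unfold peskinPhi
  rw [abs_of_nonneg (by linarith), if_neg (by intro hc; linarith), if_pos (by linarith),
    show -7 + 12 * (2 - a) - 4 * (2 - a) ^ 2 = 1 + 4 * a - 4 * a ^ 2 by ring]
  ring

lemma phi_moment (r : ℝ) :
    ∑ n ∈ ({⌊r⌋ - 1, ⌊r⌋, ⌊r⌋ + 1, ⌊r⌋ + 2} : Finset ℤ),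
      (((n : ℝ) - r) * peskinPhi ((n : ℝ) - r)) = 0 := by
  have ha0 : (0:ℝ) ≤ r - ⌊r⌋ := by
    have := Int.floor_le r; linarith
  have ha1 : r - ⌊r⌋ < 1 := by
    have := Int.lt_floor_add_one r; linarith
  set a := r - ⌊r⌋ with haa
  rw [Finset.sum_insert (by simp <;> omega), Finset.sum_insert (by simp <;> omega),
    Finset.sum_insert (by simp <;> omega), Finset.sum_singleton]
  push_cast
  have e1 : ((⌊r⌋ : ℝ) - 1 - r) = -(1 + a) := by rw [haa]; ring
  have e2 : ((⌊r⌋ : ℝ) - r) = -a := by rw [haa]; ring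
  have e3 : ((⌊r⌋ : ℝ) + 1 - r) = 1 - a := by rw [haa]; ring
  have e4 : ((⌊r⌋ : ℝ) + 2 - r) = 2 - a := by rw [haa]; ring
  rw [e1, e2, e3, e4, peskinPhi_neg, peskinPhi_neg,
    phi_eval0 ha0 ha1, phi_eval1 ha0 ha1, phi_eval1m ha0 ha1, phi_eval2m ha0 ha1]
  ring


/-- First-moment condition for the discrete delta function: for every grid spacing
`h > 0` and every `X ∈ ℝ³`, the vector-valued sum over all grid points `x = h·v`,
`v ∈ ℤ³`, of `(x − X)·δ̂(x − X, h)·h³` equals the zero vector of `ℝ³`. -/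
theorem deltaHat_firstMoment (h : ℝ) (hh : 0 < h) (X : Fin 3 → ℝ) :
    ∑' v : Fin 3 → ℤ,
      (deltaHat (fun i => h * (v i : ℝ) - X i) h * h ^ 3) •
        (fun i => h * (v i : ℝ) - X i : Fin 3 → ℝ) = 0 := by
  have hne : h ≠ 0 := hh.ne'
  set r : Fin 3 → ℝ := fun k => X k / h with hr
  set s : Fin 3 → Finset ℤ := fun k => {⌊r k⌋ - 1, ⌊r k⌋, ⌊r k⌋ + 1, ⌊r k⌋ + 2} with hs
  have harg : ∀ (k : Fin 3) (n : ℤ), (h * (n : ℝ) - X k) / h = (n : ℝ) - r k := by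
    intro k n; rw [hr]; field_simp; try ring
  have hsupp : ∀ (k : Fin 3) (n : ℤ), n ∉ s k → peskinPhi ((n : ℝ) - r k) = 0 := by
    intro k n hn
    apply peskinPhi_zero_of_two_le
    simp [hs] at hn
    have hf1 : ((⌊r k⌋ : ℤ) : ℝ) ≤ r k := Int.floor_le _
    have hf2 : r k < (⌊r k⌋ : ℤ) + 1 := Int.lt_floor_add_one _
    rw [le_abs]
    rcases (by omega : n ≤ ⌊r k⌋ - 2 ∨ ⌊r k⌋ + 3 ≤ n) with hc | hc
    · right
      have : (n : ℝ) ≤ ((⌊r k⌋ : ℤ) : ℝ) - 2 := by exact_mod_cast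
        (by exact_mod_cast hc : (n : ℝ) ≤ ((⌊r k⌋ - 2 : ℤ) : ℝ))
      linarith
    · left
      have : ((⌊r k⌋ : ℤ) : ℝ) + 3 ≤ (n : ℝ) := by exact_mod_cast
        (by exact_mod_cast hc : ((⌊r k⌋ + 3 : ℤ) : ℝ) ≤ (n : ℝ))
      linarith
  rw [tsum_eq_sum (s := Fintype.piFinset s)
    (fun v hv => by
      rw [Fintype.mem_piFinset] at hv
      push_neg at hv
      obtain ⟨k, hk⟩ := hv
      have h0 := hsupp k _ hk
      have hd : deltaHat (fun i => h * (v i : ℝ) - X i) h = 0 := by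
        simp only [deltaHat, harg]
        have h00 : peskinPhi (((v 0 : ℤ) : ℝ) - r 0) = 0 ∨
            peskinPhi (((v 1 : ℤ) : ℝ) - r 1) = 0 ∨
            peskinPhi (((v 2 : ℤ) : ℝ) - r 2) = 0 := by
          fin_cases k
          · exact Or.inl h0
          · exact Or.inr (Or.inl h0)
          · exact Or.inr (Or.inr h0)
        rcases h00 with h00 | h00 | h00 <;> rw [h00] <;> ring
      rw [hd, zero_mul, zero_smul])]
  funext i
  rw [Finset.sum_apply]
  simp only [Pi.zero_apply, Pi.smul_apply, smul_eq_mul]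
  set G : Fin 3 → ℤ → ℝ := fun k n =>
    if k = i then (h * (n : ℝ) - X i) * peskinPhi ((n : ℝ) - r k)
    else peskinPhi ((n : ℝ) - r k) with hG
  have key : ∀ v : Fin 3 → ℤ,
      deltaHat (fun j => h * (v j : ℝ) - X j) h * h ^ 3 * (h * (v i : ℝ) - X i)
        = ∏ k, G k (v k) := by
    intro v
    rw [Fin.prod_univ_three]
    simp only [deltaHat, harg, hG]
    fin_cases i <;> simp <;> field_simp <;> ring
  rw [Finset.sum_congr rfl (fun v _ => key v), ← Finset.prod_univ_sum]
  apply Finset.prod_eq_zero (Finset.mem_univ i)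
  have hGi : ∀ n : ℤ, G i n = h * (((n : ℝ) - r i) * peskinPhi ((n : ℝ) - r i)) := by
    intro n
    have e : h * (n : ℝ) - X i = h * ((n : ℝ) - r i) := by
      rw [hr]; field_simp; try ring
    simp only [hG, eq_self_iff_true, if_true, e]
    ring
  rw [Finset.sum_congr rfl (fun n _ => hGi n), ← Finset.mul_sum, hs]
  simp only []
  rw [phi_moment (r i), mul_zero]
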